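/- For the BPUC instance with sizes S = {1,1,2} (so q_1 = 2 items of size 1 and q_2 = 1 item of size 2) and bins B = {(3,1,1),(3,4,4)}, the optimal value of the cutting-stock LP relaxation is z2* = 10, strictly greater than the optimal value of the arc-flow LP relaxation z3* = 28/3 ≈ 9.33. Hence the cutting-stock LP bound can be strictly stronger than the arc-flow LP bound. -/

import Mathlib

open Finset

def patSize {n' : ℕ} (wsz q : Fin n' → ℕ) (g : ∀ d : Fin n', Fin (q d + 1)) : ℕ :=
  ∑ d, (g d : ℕ) * wsz d

def CSfeas {n' m : ℕ} (wsz q : Fin n' → ℕ) (C : Fin m → ℕ)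
    (p : Fin m → (∀ d : Fin n', Fin (q d + 1)) → ℝ) : Prop :=
  (∀ j g, 0 ≤ p j g) ∧
  (∀ j g, ¬ patSize wsz q g ≤ C j → p j g = 0) ∧
  (∀ d, ∑ j, ∑ g, ((g d : ℕ) : ℝ) * p j g = (q d : ℝ)) ∧
  (∀ j, ∑ g, p j g = 1)

noncomputable def CSobj {n' m : ℕ} (wsz q : Fin n' → ℕ) (f c : Fin m → ℝ)
    (p : Fin m → (∀ d : Fin n', Fin (q d + 1)) → ℝ) : ℝ :=
  ∑ j, ∑ g,
    (if patSize wsz q g = 0 then 0 else f j + c j * (patSize wsz q g : ℝ)) * p j g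

def AFfeas {n' m : ℕ} (wsz q : Fin n' → ℕ) (C : Fin m → ℕ) (Cmax : ℕ)
    (x : ℕ → Fin n' → ℝ) (y : Fin m → ℕ → ℝ) : Prop :=
  (∀ kk d, 0 ≤ x kk d) ∧
  (∀ j a, 0 ≤ y j a) ∧
  (∀ kk d, ¬ kk + wsz d ≤ Cmax → x kk d = 0) ∧
  (∀ j a, ¬ a ≤ C j → y j a = 0) ∧
  (∀ b, 1 ≤ b → b ≤ Cmax →
    (∑ d, if wsz d ≤ b then x (b - wsz d) d else 0)
      - (∑ d, x b d) - (∑ j, y j b) = 0) ∧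
  (0 - (∑ d, x 0 d) - (∑ j, y j 0) = -(m : ℝ)) ∧
  (∀ j, ∑ a ∈ Finset.range (Cmax + 1), y j a = 1) ∧
  (∀ d, ∑ kk ∈ Finset.range (Cmax + 1), x kk d = (q d : ℝ))

noncomputable def AFobj {m : ℕ} (f c : Fin m → ℝ) (Cmax : ℕ)
    (y : Fin m → ℕ → ℝ) : ℝ :=
  ∑ j, ∑ a ∈ Finset.range (Cmax + 1),
    (if a = 0 then 0 else f j + (a : ℝ) * c j) * y j a

/-- Instance of Proposition 4: item sizes 1,1,2 (so `w' = (1,2)`, `q = (2,1)`) and bins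
`(C,f,c) = (3,1,1)` and `(3,4,4)`. -/
def wsz8 : Fin 2 → ℕ := ![1, 2]
def q8 : Fin 2 → ℕ := ![2, 1]
def C8 : Fin 2 → ℕ := ![3, 3]
noncomputable def f8 : Fin 2 → ℝ := ![1, 4]
noncomputable def c8 : Fin 2 → ℝ := ![1, 4]

/- auxiliary -/
def mk8 (a : Fin 3) (b : Fin 2) : ∀ d : Fin 2, Fin (q8 d + 1) :=
  Fin.cons a (Fin.cons b finZeroElim)

lemma piSum8 (F : (∀ d : Fin 2, Fin (q8 d + 1)) → ℝ) :
    ∑ g, F g = ∑ a : Fin 3, ∑ b : Fin 2, F (mk8 a b) := by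
  rw [← (piFinTwoEquiv (fun d => Fin (q8 d + 1))).symm.sum_comp F]
  rw [Fintype.sum_prod_type]
  rfl

lemma g_eq_mk8 (g : ∀ d : Fin 2, Fin (q8 d + 1)) : g = mk8 (g 0) (g 1) := by
  funext d
  fin_cases d <;> rfl

lemma patSize_mk8 (a : Fin 3) (b : Fin 2) :
    patSize wsz8 q8 (mk8 a b) = (a : ℕ) + (b : ℕ) * 2 := by
  simp [patSize, Fin.sum_univ_two, mk8, wsz8]
  rfl

lemma mk8_0 (a : Fin 3) (b : Fin 2) : ((mk8 a b 0 : Fin 3) : ℕ) = (a : ℕ) := rfl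
lemma mk8_1 (a : Fin 3) (b : Fin 2) : ((mk8 a b 1 : Fin 2) : ℕ) = (b : ℕ) := rfl

noncomputable def p8 : Fin 2 → (∀ d : Fin 2, Fin (q8 d + 1)) → ℝ :=
  fun j g => if j = 0 then (if (g 0 : ℕ) = 1 ∧ (g 1 : ℕ) = 1 then 1 else 0)
    else (if (g 0 : ℕ) = 2 ∧ (g 1 : ℕ) = 0 then 1/2
      else if (g 0 : ℕ) = 0 ∧ (g 1 : ℕ) = 0 then 1/2 else 0)

lemma CSfeas8 : CSfeas wsz8 q8 C8 p8 := by
  refine ⟨?_, ?_, ?_, ?_⟩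
  · intro j g
    simp only [p8]
    split_ifs <;> norm_num
  · intro j g h
    have hC : C8 j = 3 := by fin_cases j <;> rfl
    rw [g_eq_mk8 g, patSize_mk8 (g 0) (g 1), hC] at h
    have ha : (g 0 : ℕ) ≤ 2 := Nat.lt_succ_iff.mp (g 0).isLt
    have hb : (g 1 : ℕ) ≤ 1 := Nat.lt_succ_iff.mp (g 1).isLt
    simp only [p8]
    split_ifs <;> first | rfl | omega
  · rw [Fin.forall_fin_two]
    constructor <;>
    · simp only [Fin.sum_univ_two]
      rw [piSum8, piSum8]
      norm_num [Fin.sum_univ_three, Fin.sum_univ_two, mk8_0, mk8_1, p8, q8]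
      try decide
  · rw [Fin.forall_fin_two]
    constructor <;>
    · rw [piSum8]
      norm_num [Fin.sum_univ_three, Fin.sum_univ_two, mk8_0, mk8_1, p8]
      try decide

lemma CSobj8 : CSobj wsz8 q8 f8 c8 p8 = 10 := by
  unfold CSobj
  simp only [Fin.sum_univ_two]
  rw [piSum8, piSum8]
  norm_num [Fin.sum_univ_three, Fin.sum_univ_two, mk8_0, mk8_1, p8, patSize_mk8, f8, c8]
  split_ifs at * <;> simp_all
  norm_num

lemma CS_lb (p : Fin 2 → (∀ d : Fin 2, Fin (q8 d + 1)) → ℝ)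
    (h : CSfeas wsz8 q8 C8 p) : 10 ≤ CSobj wsz8 q8 f8 c8 p := by
  obtain ⟨hpos, hforb, hdem, hconv⟩ := h
  have hd0 := hdem 0
  have hd1 := hdem 1
  have hc0 := hconv 0
  have hc1 := hconv 1
  have hz0 : p 0 (mk8 2 1) = 0 := hforb 0 (mk8 2 1) (by rw [patSize_mk8]; decide)
  have hz1 : p 1 (mk8 2 1) = 0 := hforb 1 (mk8 2 1) (by rw [patSize_mk8]; decide)
  simp only [Fin.sum_univ_two] at hd0 hd1
  rw [piSum8, piSum8] at hd0 hd1
  rw [piSum8] at hc0 hc1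
  unfold CSobj
  simp only [Fin.sum_univ_two]
  rw [piSum8, piSum8]
  norm_num [Fin.sum_univ_three, Fin.sum_univ_two, mk8_0, mk8_1, q8, patSize_mk8,
    f8, c8] at hd0 hd1 hc0 hc1 ⊢
  split_ifs with h2
  · exact absurd h2 (by decide)
  linarith [hpos 0 (mk8 0 0), hpos 0 (mk8 1 0), hpos 0 (mk8 2 0),
    hpos 0 (mk8 0 1), hpos 0 (mk8 1 1), hpos 0 (mk8 2 1),
    hpos 1 (mk8 0 0), hpos 1 (mk8 1 0), hpos 1 (mk8 2 0),
    hpos 1 (mk8 0 1), hpos 1 (mk8 1 1), hpos 1 (mk8 2 1)]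

noncomputable def x8 : ℕ → Fin 2 → ℝ := fun k d =>
  if d = 0 then (if k = 0 then 2/3 else if k = 1 then 1/3 else if k = 2 then 1 else 0)
  else (if k = 0 then 2/3 else if k = 1 then 1/3 else 0)

noncomputable def y8 : Fin 2 → ℕ → ℝ := fun j a =>
  if j = 0 then (if a = 3 then 1 else 0)
  else (if a = 3 then 1/3 else if a = 0 then 2/3 else 0)

lemma AFfeas8 : AFfeas wsz8 q8 C8 3 x8 y8 := by
  refine ⟨?_, ?_, ?_, ?_, ?_, ?_, ?_, ?_⟩
  · intro kk d
    simp only [x8]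
    split_ifs <;> norm_num
  · intro j a
    simp only [y8]
    split_ifs <;> norm_num
  · intro kk d h
    fin_cases d <;> simp [wsz8] at h <;> simp [x8] <;> split_ifs <;>
      first | rfl | (exfalso; omega)
  · intro j a h
    have : C8 j = 3 := by fin_cases j <;> rfl
    rw [this] at h
    fin_cases j <;> simp [y8] <;> (try split_ifs) <;> first | rfl | omega | (exfalso; omega)
  · intro b hb1 hb2
    interval_cases b <;>
      norm_num [Fin.sum_univ_two, wsz8, x8, y8]
  · norm_num [Fin.sum_univ_two, x8, y8]
  · intro j
    fin_cases j <;> norm_num [Finset.sum_range_succ, y8]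
  · intro d
    fin_cases d <;> norm_num [Finset.sum_range_succ, x8, q8]

lemma AFobj8 : AFobj f8 c8 3 y8 = 28 / 3 := by
  unfold AFobj
  norm_num [Fin.sum_univ_two, Finset.sum_range_succ, y8, f8, c8]

lemma AF_lb (x : ℕ → Fin 2 → ℝ) (y : Fin 2 → ℕ → ℝ)
    (h : AFfeas wsz8 q8 C8 3 x y) : 28 / 3 ≤ AFobj f8 c8 3 y := by
  obtain ⟨hxpos, hypos, hxz, hyz, hflow, hnode0, hysum, hxsum⟩ := h
  have hz1 : x 3 0 = 0 := hxz 3 0 (by decide)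
  have hz2 : x 2 1 = 0 := hxz 2 1 (by decide)
  have hz3 : x 3 1 = 0 := hxz 3 1 (by decide)
  have hf1 := hflow 1 (by norm_num) (by norm_num)
  have hf2 := hflow 2 (by norm_num) (by norm_num)
  have hf3 := hflow 3 (by norm_num) (by norm_num)
  have hy0 := hysum 0
  have hy1 := hysum 1
  have hx0 := hxsum 0
  have hx1 := hxsum 1
  unfold AFobj
  norm_num [Fin.sum_univ_two, Finset.sum_range_succ, wsz8, q8, f8, c8]
    at hf1 hf2 hf3 hnode0 hy0 hy1 hx0 hx1 ⊢
  linarith [hypos 0 0, hypos 0 1, hypos 0 2, hypos 0 3,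
    hypos 1 0, hypos 1 1, hypos 1 2, hypos 1 3]

/-- on this instance the cutting-stock LP optimum is `z2* = 10`, the
arc-flow LP optimum is `z3* = 28/3`, and `z2* > z3*`: the cutting-stock bound can be
strictly stronger than the arc-flow bound. -/
theorem stmt8 :
    IsLeast {z : ℝ | ∃ p, CSfeas wsz8 q8 C8 p ∧ z = CSobj wsz8 q8 f8 c8 p} 10 ∧
    IsLeast {z : ℝ | ∃ x y, AFfeas wsz8 q8 C8 3 x y ∧ z = AFobj f8 c8 3 y} (28 / 3) ∧
    (28 / 3 : ℝ) < 10 := by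
  refine ⟨⟨⟨p8, CSfeas8, CSobj8.symm⟩, ?_⟩, ⟨⟨x8, y8, AFfeas8, AFobj8.symm⟩, ?_⟩, by norm_num⟩
  · rintro z ⟨p, hf, rfl⟩
    exact CS_lb p hf
  · rintro z ⟨x, y, hf, rfl⟩
    exact AF_lb x y hf
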